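/- On 𝕋ⁿ × S^{n+1} with coordinates (x₁,…,xₙ) ∈ 𝕋ⁿ and (y₁,…,y_{n+2}) ∈ S^{n+1} ⊂ ℝ^{n+2}, the 1-form α = Σ_{j=1}^{n} yⱼ dxⱼ + ½(y_{n+1} dy_{n+2} − y_{n+2} dy_{n+1}) is a contact form; moreover, its restriction to each sphere {x} × S^{n+1} equals ½(y_{n+1} dy_{n+2} − y_{n+2} dy_{n+1}), which induces the standard Legendrian open book on S^{n+1} with binding {y_{n+1} = y_{n+2} = 0}. -/

import Mathlib

def Vext (n : ℕ) (f : Fin n → ℝ) (p q : ℝ) : EuclideanSpace ℝ (Fin (n+2)) :=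
  WithLp.toLp 2 (fun i => if h : (i : ℕ) < n then f ⟨i, h⟩ else if (i : ℕ) = n then p else q)

lemma Vext_castLE {n : ℕ} (f : Fin n → ℝ) (p q : ℝ) (h : n ≤ n + 2) (j : Fin n) :
    Vext n f p q (Fin.castLE h j) = f j := by
  simp [Vext, Fin.castLE, j.isLt]

lemma Vext_n {n : ℕ} (f : Fin n → ℝ) (p q : ℝ) (h : n < n + 2) :
    Vext n f p q ⟨n, h⟩ = p := by simp [Vext]

lemma Vext_n1 {n : ℕ} (f : Fin n → ℝ) (p q : ℝ) (h : n + 1 < n + 2) :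
    Vext n f p q ⟨n+1, h⟩ = q := by
  simp [Vext]

lemma sum_split {n : ℕ} (g : Fin (n+2) → ℝ) :
    ∑ i, g i = (∑ j : Fin n, g (Fin.castLE (Nat.le_add_right n 2) j)) +
      g ⟨n, Nat.lt_add_of_pos_right two_pos⟩ + g ⟨n+1, Nat.lt_add_one (n+1)⟩ := by
  rw [Fin.sum_univ_castSucc, Fin.sum_univ_castSucc]
  rfl

lemma inner_split {n : ℕ} (y v : EuclideanSpace ℝ (Fin (n+2))) :
    (inner ℝ y v : ℝ) = (∑ j : Fin n, y (Fin.castLE (Nat.le_add_right n 2) j) * v (Fin.castLE (Nat.le_add_right n 2) j)) +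
      y ⟨n, Nat.lt_add_of_pos_right two_pos⟩ * v ⟨n, Nat.lt_add_of_pos_right two_pos⟩ + y ⟨n+1, Nat.lt_add_one (n+1)⟩ * v ⟨n+1, Nat.lt_add_one (n+1)⟩ := by
  rw [PiLp.inner_apply]
  simp only [RCLike.inner_apply, starRingEnd_apply, star_trivial]
  simp only [mul_comm (WithLp.ofLp v _)]
  exact sum_split _

lemma sum_lin {n : ℕ} (F G H : Fin n → ℝ) (c d : ℝ)
    (hFG : ∀ j, F j = c * G j - d * H j) :
    ∑ j, F j = c * (∑ j, G j) - d * (∑ j, H j) := by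
  simp [hFG, Finset.sum_sub_distrib, Finset.mul_sum]

lemma core {n : ℕ} (Y u v : Fin n → ℝ) (a b p q : ℝ)
    (hnorm : (∑ j, Y j * Y j) + a * a + b * b = 1)
    (h1 : (∑ j, Y j * v j) + a * p + b * q = 0)
    (h2 : (∑ j, Y j * u j) + (1/2) * (a * q - b * p) = 0)
    (hd : ∀ (u' v' : Fin n → ℝ) (p' q' : ℝ),
      (∑ j, Y j * v' j) + a * p' + b * q' = 0 →
      (∑ j, Y j * u' j) + (1/2) * (a * q' - b * p') = 0 →
      (∑ j, (v j * u' j - v' j * u j)) + (p * q' - q * p') = 0) :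
    u = 0 ∧ v = 0 ∧ p = 0 ∧ q = 0 := by
  have hRnn : (0:ℝ) ≤ ∑ j, Y j * Y j := Finset.sum_nonneg fun j _ => mul_self_nonneg _
  have hR1 : (0:ℝ) < 1 + ∑ j, Y j * Y j := by linarith
  -- t := a*p + b*q = 0
  have hC := hd (fun j => -(a*a+b*b) * Y j) (fun _ => 0)
      (-(2 * (∑ j, Y j * Y j) * b)) (2 * (∑ j, Y j * Y j) * a)
      (by simp only [mul_zero, Finset.sum_const_zero]; ring)
      (by rw [sum_lin (fun j => Y j * (-(a*a+b*b) * Y j)) (fun j => Y j * Y j)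
            (fun j => Y j * Y j) (-(a*a+b*b)) 0 (fun j => by ring)]; ring)
  rw [sum_lin _ (fun j => Y j * v j) (fun j => Y j * u j) (-(a*a+b*b)) 0
      (fun j => by ring)] at hC
  have ht' : (a * p + b * q) * (1 + ∑ j, Y j * Y j) = 0 := by
    linear_combination hC + (a*a+b*b) * h1 - (a*p+b*q) * hnorm
  have ht : a * p + b * q = 0 :=
    (mul_eq_zero.mp ht').resolve_right (by linarith)
  -- s := a*q - b*p = 0
  have hD := hd (fun _ => 0) (fun j => -(2*(a*a+b*b)) * Y j)
      (2 * (∑ j, Y j * Y j) * a) (2 * (∑ j, Y j * Y j) * b)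
      (by rw [sum_lin (fun j => Y j * (-(2*(a*a+b*b)) * Y j)) (fun j => Y j * Y j)
            (fun j => Y j * Y j) (-(2*(a*a+b*b))) 0 (fun j => by ring)]; ring)
      (by simp only [mul_zero, Finset.sum_const_zero]; ring)
  rw [sum_lin _ (fun j => Y j * u j) (fun j => Y j * v j) (2*(a*a+b*b)) 0
      (fun j => by ring)] at hD
  have hs' : (a * q - b * p) * (1 + ∑ j, Y j * Y j) = 0 := by
    linear_combination (-1) * hD + (2*(a*a+b*b)) * h2 - (a*q-b*p) * hnorm
  have hs : a * q - b * p = 0 :=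
    (mul_eq_zero.mp hs').resolve_right (by linarith)
  clear hC hD ht' hs'
  have hSYv : (∑ j, Y j * v j) = 0 := by linear_combination h1 - ht
  have hSYu : (∑ j, Y j * u j) = 0 := by linear_combination h2 - (1/2) * hs
  -- v = 0
  have hA := hd v (fun _ => 0) 0 0
      (by simp) (by simpa using hSYv)
  rw [sum_lin _ (fun j => v j * v j) (fun j => v j * v j) 1 0 (fun j => by ring)] at hA
  have hvv : (∑ j, v j * v j) = 0 := by linear_combination hA
  have hv : v = 0 := by
    funext j
    exact mul_self_eq_zero.mp
      ((Finset.sum_eq_zero_iff_of_nonneg (fun i _ => mul_self_nonneg (v i))).mp hvv j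
        (Finset.mem_univ j))
  -- u = 0
  have hB := hd (fun _ => 0) u 0 0 (by simpa using hSYu) (by simp)
  rw [sum_lin _ (fun j => u j * u j) (fun j => u j * u j) 0 1 (fun j => by ring)] at hB
  have huu : (∑ j, u j * u j) = 0 := by linear_combination -hB
  have hu : u = 0 := by
    funext j
    exact mul_self_eq_zero.mp
      ((Finset.sum_eq_zero_iff_of_nonneg (fun i _ => mul_self_nonneg (u i))).mp huu j
        (Finset.mem_univ j))
  clear hA hB
  refine ⟨hu, hv, ?_, ?_⟩
  · by_cases hab : a*a + b*b = 0
    · have ha : a = 0 := by nlinarith [mul_self_nonneg a, mul_self_nonneg b]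
      have hb : b = 0 := by nlinarith [mul_self_nonneg a, mul_self_nonneg b]
      have hpq := hd (fun _ => 0) (fun _ => 0) (-q) p
        (by simp [ha, hb]) (by simp [ha, hb])
      simp only [mul_zero, zero_mul, sub_zero, Finset.sum_const_zero, zero_add] at hpq
      nlinarith [mul_self_nonneg p, mul_self_nonneg q]
    · have h3 : (a*a+b*b) * p = 0 := by linear_combination a*ht - b*hs
      exact (mul_eq_zero.mp h3).resolve_left hab
  · by_cases hab : a*a + b*b = 0
    · have ha : a = 0 := by nlinarith [mul_self_nonneg a, mul_self_nonneg b]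
      have hb : b = 0 := by nlinarith [mul_self_nonneg a, mul_self_nonneg b]
      have hpq := hd (fun _ => 0) (fun _ => 0) (-q) p
        (by simp [ha, hb]) (by simp [ha, hb])
      simp only [mul_zero, zero_mul, sub_zero, Finset.sum_const_zero, zero_add] at hpq
      nlinarith [mul_self_nonneg p, mul_self_nonneg q]
    · have h3 : (a*a+b*b) * q = 0 := by linear_combination b*ht + a*hs
      exact (mul_eq_zero.mp h3).resolve_left hab

open Metric

/-- **A contact form on `𝕋ⁿ × S^{n+1}` whose spheres carry the standard
Legendrian open book.**  On `𝕋ⁿ × S^{n+1}` with `(x₁,…,xₙ) ∈ 𝕋ⁿ` and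
`y = (y₁,…,y_{n+2}) ∈ S^{n+1} ⊂ ℝ^{n+2}`, consider
`α = Σⱼ yⱼ dxⱼ + ½(y_{n+1} dy_{n+2} − y_{n+2} dy_{n+1})`.  Pointwise, the
tangent space at `(x, y)` is `{(u, v) ∈ ℝⁿ × ℝ^{n+2} : ⟨y, v⟩ = 0}`, and
`α(u,v) = Σⱼ yⱼ uⱼ + ½(y_{n+1} v_{n+2} − y_{n+2} v_{n+1})`, with
`dα((u,v),(u',v')) = Σⱼ (vⱼ u'ⱼ − v'ⱼ uⱼ) + dy_{n+1} ∧ dy_{n+2}`.  Then `α` is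
a contact form (`dα` is nondegenerate on `ker α` at every point); its
restriction to the sphere `{x} × S^{n+1}` (vectors with `u = 0`) is
`β = ½(y_{n+1} dy_{n+2} − y_{n+2} dy_{n+1})`, which induces the standard
Legendrian open book on `S^{n+1}`: `β` vanishes on the whole tangent space of
the sphere exactly at the binding `{y_{n+1} = y_{n+2} = 0}`. -/
theorem torus_times_sphere_contact_form (n : ℕ)
    (y : EuclideanSpace ℝ (Fin (n + 2)))
    (hy : y ∈ sphere (0 : EuclideanSpace ℝ (Fin (n + 2))) 1)
    (α : (Fin n → ℝ) × EuclideanSpace ℝ (Fin (n + 2)) → ℝ)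
    (hα : ∀ w, α w =
      (∑ j : Fin n, y (Fin.castLE (by omega) j) * w.1 j) +
        (1 / 2) * (y ⟨n, by omega⟩ * w.2 ⟨n + 1, by omega⟩ -
          y ⟨n + 1, by omega⟩ * w.2 ⟨n, by omega⟩))
    (dα : ((Fin n → ℝ) × EuclideanSpace ℝ (Fin (n + 2))) →
      ((Fin n → ℝ) × EuclideanSpace ℝ (Fin (n + 2))) → ℝ)
    (hdα : ∀ w w', dα w w' =
      (∑ j : Fin n, (w.2 (Fin.castLE (by omega) j) * w'.1 j -
        w'.2 (Fin.castLE (by omega) j) * w.1 j)) +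
        (w.2 ⟨n, by omega⟩ * w'.2 ⟨n + 1, by omega⟩ -
          w.2 ⟨n + 1, by omega⟩ * w'.2 ⟨n, by omega⟩)) :
    -- `α` is a contact form: `dα` is nondegenerate on `ker α ∩ T_{(x,y)}M`
    (∀ w : (Fin n → ℝ) × EuclideanSpace ℝ (Fin (n + 2)),
      inner ℝ y w.2 = (0 : ℝ) → α w = 0 →
      (∀ w' : (Fin n → ℝ) × EuclideanSpace ℝ (Fin (n + 2)),
        inner ℝ y w'.2 = (0 : ℝ) → α w' = 0 → dα w w' = 0) →
      w = 0) ∧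
    -- the restriction of `α` to `{x} × S^{n+1}` is
    -- `½(y_{n+1} dy_{n+2} − y_{n+2} dy_{n+1})` …
    (∀ v : EuclideanSpace ℝ (Fin (n + 2)), α (0, v) =
      (1 / 2) * (y ⟨n, by omega⟩ * v ⟨n + 1, by omega⟩ -
        y ⟨n + 1, by omega⟩ * v ⟨n, by omega⟩)) ∧
    -- … which induces the standard Legendrian open book on the sphere, with
    -- binding `{y_{n+1} = y_{n+2} = 0}`
    ((∀ v : EuclideanSpace ℝ (Fin (n + 2)), inner ℝ y v = (0 : ℝ) → α (0, v) = 0)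
      ↔ (y ⟨n, by omega⟩ = 0 ∧ y ⟨n + 1, by omega⟩ = 0)) := by
  have hyy : (inner ℝ y y : ℝ) = 1 := by
    rw [real_inner_self_eq_norm_mul_norm]
    have : ‖y‖ = 1 := by simpa using mem_sphere_zero_iff_norm.mp hy
    rw [this]; norm_num
  rw [inner_split] at hyy
  refine ⟨?_, ?_, ?_⟩
  · -- contact condition
    intro w hw hαw hd
    rw [inner_split] at hw
    rw [hα] at hαw
    have hd' : ∀ (u' v' : Fin n → ℝ) (p' q' : ℝ),
        (∑ j, (fun j => y (Fin.castLE (by omega : n ≤ n+2) j)) j * v' j) +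
          y ⟨n, by omega⟩ * p' + y ⟨n+1, by omega⟩ * q' = 0 →
        (∑ j, (fun j => y (Fin.castLE (by omega : n ≤ n+2) j)) j * u' j) +
          (1/2) * (y ⟨n, by omega⟩ * q' - y ⟨n+1, by omega⟩ * p') = 0 →
        (∑ j, ((fun j => w.2 (Fin.castLE (by omega : n ≤ n+2) j)) j * u' j - v' j * w.1 j)) +
          (w.2 ⟨n, by omega⟩ * q' - w.2 ⟨n+1, by omega⟩ * p') = 0 := by
      intro u' v' p' q' hh1 hh2
      have hde := hd (u', Vext n v' p' q')
        (by rw [inner_split]; simpa only [Vext_castLE, Vext_n, Vext_n1] using hh1)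
        (by rw [hα]; simpa only [Vext_castLE, Vext_n, Vext_n1] using hh2)
      rw [hdα] at hde
      simpa only [Vext_castLE, Vext_n, Vext_n1] using hde
    obtain ⟨hu, hv, hp, hq⟩ := core (fun j => y (Fin.castLE (by omega) j)) w.1
      (fun j => w.2 (Fin.castLE (by omega) j)) (y ⟨n, by omega⟩) (y ⟨n+1, by omega⟩)
      (w.2 ⟨n, by omega⟩) (w.2 ⟨n+1, by omega⟩) hyy hw hαw hd'
    have hw2 : w.2 = 0 := by
      ext i
      by_cases h : (i : ℕ) < n
      · exact congrFun hv ⟨i, h⟩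
      · by_cases h2 : (i : ℕ) = n
        · have hi : i = ⟨n, by omega⟩ := Fin.ext h2
          rw [hi]; exact hp
        · have h3 : (i : ℕ) = n + 1 := by have := i.isLt; omega
          have hi : i = ⟨n + 1, by omega⟩ := Fin.ext h3
          rw [hi]; exact hq
    rw [Prod.ext_iff]
    exact ⟨hu, hw2⟩
  · -- restriction to sphere
    intro v
    rw [hα]
    simp
  · -- binding characterization
    constructor
    · intro h
      have h1 := h (Vext n 0 (-(y ⟨n+1, by omega⟩)) (y ⟨n, by omega⟩))
        (by rw [inner_split]
            simp only [Vext_castLE, Vext_n, Vext_n1, Pi.zero_apply, mul_zero,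
              Finset.sum_const_zero]
            ring)
      rw [hα] at h1
      simp only [Vext_castLE, Vext_n, Vext_n1, Pi.zero_apply, mul_zero,
        Finset.sum_const_zero, zero_add] at h1
      constructor
      · nlinarith [mul_self_nonneg (y ⟨n, by omega⟩), mul_self_nonneg (y ⟨n+1, by omega⟩)]
      · nlinarith [mul_self_nonneg (y ⟨n, by omega⟩), mul_self_nonneg (y ⟨n+1, by omega⟩)]
    · rintro ⟨h1, h2⟩ v hv
      rw [hα]
      simp [h1, h2]
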